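/- Under the user × advertiser adjacency relation with post-attribution contribution bound enforcement with bound r, for any attribution rule, any two adjacent datasets (differing by adding all impressions and conversions of a single (user, advertiser) pair) yield attributed datasets at ℓ1-distance at most r. -/

import Mathlib

/-! Framework for differentially private ad conversion measurement
(Delaney et al., "Differentially Private Ad Conversion Measurement"). -/

structure Impression where
  time : ℕ
  user : ℕ
  pub : ℕ
  adv : ℕ
  id : ℕ
deriving DecidableEq

structure Conversion where
  time : ℕ
  user : ℕ
  adv : ℕ
  id : ℕ
deriving DecidableEq

structure Dataset where
  imps : List Impression
  convs : List Conversion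

/-- An attribution rule maps a time-ordered list of impressions and a conversion
to a list of credits (one per impression). -/
abbrev AttrRule := List Impression → Conversion → List ℝ

/-- A valid attribution rule outputs one nonnegative weight per impression, summing to 1. -/
def ValidRule (a : AttrRule) : Prop :=
  ∀ is c, is ≠ [] →
    (a is c).length = is.length ∧ (a is c).sum = 1 ∧ ∀ w ∈ a is c, (0 : ℝ) ≤ w

/-- Impressions eligible for attribution of conversion `c`: those occurring earlier
with the same user and advertiser. -/
def eligible (D : Dataset) (c : Conversion) : List Impression :=
  D.imps.filter fun i => decide (i.time < c.time ∧ i.user = c.user ∧ i.adv = c.adv)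

/-- ℓ₁ distance between attributed datasets. -/
noncomputable def l1dist (w w' : (Impression × Conversion) →₀ ℝ) : ℝ :=
  (w - w').sum fun _ v => |v|

/-- Impressions and conversions are listed in time order. -/
def SortedDS (D : Dataset) : Prop :=
  D.imps.Pairwise (fun i j => i.time ≤ j.time) ∧
  D.convs.Pairwise (fun c c' => c.time ≤ c'.time)

/-- Inner loop of post-attribution contribution-bound enforcement: each weighted
(impression, conversion) pair is kept only if the remaining bound of its scope covers
the weight, in which case the weight is deducted. -/
noncomputable def applyPairs {σ : Type} [DecidableEq σ] (s : Impression → σ) (c : Conversion) :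
    List (Impression × ℝ) → (σ → ℝ) × ((Impression × Conversion) →₀ ℝ) →
      (σ → ℝ) × ((Impression × Conversion) →₀ ℝ)
  | [], st => st
  | (i, w) :: rest, st =>
      if w ≤ st.1 (s i) then
        applyPairs s c rest
          (Function.update st.1 (s i) (st.1 (s i) - w), st.2 + Finsupp.single (i, c) w)
      else
        applyPairs s c rest st

/-- Attribution with post-attribution contribution bound enforcement (Algorithm 1),
with contribution bounding scope map `s` and contribution bound `r`. -/
noncomputable def postAttr {σ : Type} [DecidableEq σ] (a : AttrRule) (s : Impression → σ)
    (r : ℝ) (D : Dataset) : (Impression × Conversion) →₀ ℝ :=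
  (D.convs.foldl
    (fun st c => applyPairs s c ((eligible D c).zip (a (eligible D c) c)) st)
    ((fun _ => r : σ → ℝ), (0 : (Impression × Conversion) →₀ ℝ))).2

/-- Attribution with pre-attribution contribution bound enforcement (Algorithm 2):
for each conversion, every scope with an eligible impression pays one unit of its bound
if available, otherwise its impressions are excluded from attribution. -/
noncomputable def preAttr {σ : Type} [DecidableEq σ] (a : AttrRule) (s : Impression → σ)
    (r : ℝ) (D : Dataset) : (Impression × Conversion) →₀ ℝ :=
  (D.convs.foldl
    (fun (st : (σ → ℝ) × ((Impression × Conversion) →₀ ℝ)) c =>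
      let el := eligible D c
      let surv := el.filter fun i => decide ((1 : ℝ) ≤ st.1 (s i))
      let scopes := (el.map s).dedup
      ((fun x => if x ∈ scopes ∧ (1 : ℝ) ≤ st.1 x then st.1 x - 1 else st.1 x : σ → ℝ),
        st.2 + ((surv.zip (a surv c)).map fun p => Finsupp.single (p.1, c) p.2).sum))
    ((fun _ => r : σ → ℝ), (0 : (Impression × Conversion) →₀ ℝ))).2

/-- Attribution without any contribution bound enforcement. -/
noncomputable def attrNoCap (a : AttrRule) (D : Dataset) :
    (Impression × Conversion) →₀ ℝ :=
  (D.convs.map fun c =>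
    (((eligible D c).zip (a (eligible D c) c)).map fun p => Finsupp.single (p.1, c) p.2).sum).sum

/-- Adjacency: `D'` results from `D` by adding a single impression (in time order). -/
def AddOneImpression (D D' : Dataset) : Prop :=
  ∃ (i0 : Impression) (l₁ l₂ : List Impression),
    D.imps = l₁ ++ l₂ ∧ D'.imps = l₁ ++ i0 :: l₂ ∧ D.convs = D'.convs

/-- Adjacency: `D` results from `D'` by removing all impressions whose scope (under `si`)
is `v` and all conversions whose scope (under `sc`) is `v`. -/
def RemovesScope {σ : Type} [DecidableEq σ] (si : Impression → σ)
    (sc : Conversion → Option σ) (v : σ) (D D' : Dataset) : Prop :=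
  D.imps = D'.imps.filter (fun i => decide (si i ≠ v)) ∧
  D.convs = D'.convs.filter (fun c => decide (sc c ≠ some v))

/-- First-touch attribution. -/
noncomputable def FTA : AttrRule := fun is _ =>
  match is with
  | [] => []
  | _ :: t => 1 :: t.map fun _ => 0

/-- Last-touch attribution. -/
noncomputable def LTA : AttrRule := fun is _ =>
  match is with
  | [] => []
  | _ :: _ => List.replicate (is.length - 1) 0 ++ [1]

/-- Uniform multi-touch attribution. -/
noncomputable def UNI : AttrRule := fun is _ => is.map fun _ => ((is.length : ℝ))⁻¹

/-- U-shaped attribution. -/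
noncomputable def USH : AttrRule := fun is _ =>
  match is with
  | [] => []
  | [_] => [1]
  | [_, _] => [0.5, 0.5]
  | _ :: _ :: _ :: _ =>
      (0.4 : ℝ) :: (List.replicate (is.length - 2) ((0.2 : ℝ) / ((is.length : ℝ) - 2)) ++ [0.4])

/-- Exponential time decay attribution with half-life `th`. -/
noncomputable def EXPR (th : ℝ) : AttrRule := fun is c =>
  let wt : Impression → ℝ := fun i => (2 : ℝ) ^ (-(((c.time : ℝ) - (i.time : ℝ)) / th))
  is.map fun i => wt i / (is.map wt).sum

/-! ### Auxiliary lemmas for Theorem A.4 -/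

section Aux

open Finsupp

/-- ℓ₁ norm of a finitely supported function. -/
noncomputable def l1 {α : Type*} (F : α →₀ ℝ) : ℝ := F.sum fun _ w => |w|

lemma l1_eq_sum {α : Type*} (F : α →₀ ℝ) (S : Finset α) (hS : F.support ⊆ S) :
    l1 F = ∑ x ∈ S, |F x| :=
  Finsupp.sum_of_support_subset F hS _ (by simp)

lemma l1_nonneg {α : Type*} (F : α →₀ ℝ) : 0 ≤ l1 F :=
  Finset.sum_nonneg fun _ _ => abs_nonneg _

lemma l1_add_le {α : Type*} (F G : α →₀ ℝ) : l1 (F + G) ≤ l1 F + l1 G := by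
  classical
  rw [l1_eq_sum (F + G) (F.support ∪ G.support) (Finsupp.support_add),
      l1_eq_sum F (F.support ∪ G.support) Finset.subset_union_left,
      l1_eq_sum G (F.support ∪ G.support) Finset.subset_union_right,
      ← Finset.sum_add_distrib]
  exact Finset.sum_le_sum fun x _ => by simpa using abs_add_le (F x) (G x)

lemma l1_neg {α : Type*} (F : α →₀ ℝ) : l1 (-F) = l1 F := by
  classical
  rw [l1_eq_sum (-F) F.support (by simp), l1_eq_sum F F.support subset_rfl]
  simp

lemma l1_single {α : Type*} (x : α) (w : ℝ) : l1 (Finsupp.single x w) = |w| := by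
  classical
  unfold l1
  rw [Finsupp.sum_single_index (by simp)]

variable {σ : Type} [DecidableEq σ] (s : Impression → σ) (c : Conversion)

lemma applyPairs_fst_ne (w : σ) (pairs : List (Impression × ℝ))
    (hw : ∀ p ∈ pairs, s p.1 = w)
    (st : (σ → ℝ) × ((Impression × Conversion) →₀ ℝ)) (x : σ) (hx : x ≠ w) :
    (applyPairs s c pairs st).1 x = st.1 x := by
  induction pairs generalizing st with
  | nil => rfl
  | cons p rest ih =>
    obtain ⟨i, u⟩ := p
    have hi : s i = w := hw _ List.mem_cons_self
    have hrest : ∀ p ∈ rest, s p.1 = w := fun p hp => hw p (List.mem_cons_of_mem _ hp)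
    rw [applyPairs]
    split
    · rw [ih hrest]
      simp [Function.update_of_ne (hi ▸ hx)]
    · exact ih hrest st

lemma applyPairs_decomp (pairs : List (Impression × ℝ)) (b : σ → ℝ)
    (F : (Impression × Conversion) →₀ ℝ) :
    applyPairs s c pairs (b, F) =
      ((applyPairs s c pairs (b, 0)).1, F + (applyPairs s c pairs (b, 0)).2) := by
  induction pairs generalizing b F with
  | nil => simp [applyPairs]
  | cons p rest ih =>
    obtain ⟨i, u⟩ := p
    rw [applyPairs, applyPairs]
    dsimp only
    split
    · rw [ih, ih (F := (0 : (Impression × Conversion) →₀ ℝ) + Finsupp.single (i, c) u)]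
      simp [add_assoc]
    · exact ih b F

lemma applyPairs_congr (w : σ) (pairs : List (Impression × ℝ))
    (hw : ∀ p ∈ pairs, s p.1 = w) (b1 b2 : σ → ℝ) (hb : b1 w = b2 w)
    (F : (Impression × Conversion) →₀ ℝ) :
    (applyPairs s c pairs (b1, F)).1 w = (applyPairs s c pairs (b2, F)).1 w ∧
    (applyPairs s c pairs (b1, F)).2 = (applyPairs s c pairs (b2, F)).2 := by
  induction pairs generalizing b1 b2 F with
  | nil => exact ⟨hb, rfl⟩
  | cons p rest ih =>
    obtain ⟨i, u⟩ := p
    have hi : s i = w := hw _ List.mem_cons_self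
    have hrest : ∀ p ∈ rest, s p.1 = w := fun p hp => hw p (List.mem_cons_of_mem _ hp)
    rw [applyPairs, applyPairs]
    dsimp only
    simp only [hi, hb]
    split
    · refine ih hrest _ _ ?_ _
      simp [hi, hb]
    · exact ih hrest _ _ hb _

lemma applyPairs_bound (w : σ) (pairs : List (Impression × ℝ))
    (hw : ∀ p ∈ pairs, s p.1 = w) (hnn : ∀ p ∈ pairs, (0 : ℝ) ≤ p.2) (b : σ → ℝ) :
    (applyPairs s c pairs (b, 0)).1 w ≤ b w ∧
    (0 ≤ b w → 0 ≤ (applyPairs s c pairs (b, 0)).1 w) ∧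
    l1 (applyPairs s c pairs (b, 0)).2 ≤ b w - (applyPairs s c pairs (b, 0)).1 w := by
  induction pairs generalizing b with
  | nil => simp [applyPairs, l1]
  | cons p rest ih =>
    obtain ⟨i, u⟩ := p
    have hi : s i = w := hw _ List.mem_cons_self
    have hu : (0 : ℝ) ≤ u := hnn _ List.mem_cons_self
    have hrest : ∀ p ∈ rest, s p.1 = w := fun p hp => hw p (List.mem_cons_of_mem _ hp)
    have hnnrest : ∀ p ∈ rest, (0 : ℝ) ≤ p.2 := fun p hp => hnn p (List.mem_cons_of_mem _ hp)
    rw [applyPairs]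
    dsimp only
    split
    · rename_i hcond
      rw [hi] at hcond
      set b' : σ → ℝ := Function.update b (s i) (b (s i) - u) with hb'
      have hb'w : b' w = b w - u := by simp [hb', hi]
      rw [applyPairs_decomp]
      obtain ⟨h1, h2, h3⟩ := ih hrest hnnrest b'
      refine ⟨?_, fun _ => h2 (by rw [hb'w]; linarith), ?_⟩
      · dsimp only
        rw [hb'w] at h1; linarith
      · dsimp only
        have := l1_add_le ((0 : (Impression × Conversion) →₀ ℝ) + Finsupp.single (i, c) u)
          (applyPairs s c rest (b', 0)).2
        rw [zero_add, l1_single, abs_of_nonneg hu] at this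
        rw [hb'w] at h3
        calc l1 ((0 : (Impression × Conversion) →₀ ℝ) + Finsupp.single (i, c) u +
              (applyPairs s c rest (b', 0)).2) ≤
            u + l1 (applyPairs s c rest (b', 0)).2 := by simpa using this
          _ ≤ b w - (applyPairs s c rest (b', 0)).1 w := by linarith
    · exact ih hrest hnnrest b

lemma eligible_scope (D : Dataset) (i : Impression) (hi : i ∈ eligible D c) :
    (i.user, i.adv) = (c.user, c.adv) := by
  rw [eligible, List.mem_filter] at hi
  have := of_decide_eq_true hi.2
  simp [this.2.1, this.2.2]

lemma eligible_eq (D D' : Dataset) (v : σ)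
    (himps : D.imps = D'.imps.filter fun i => decide (s i ≠ v))
    (hcv : ∀ i : Impression, i.user = c.user → i.adv = c.adv → s i ≠ v) :
    eligible D c = eligible D' c := by
  rw [eligible, eligible, himps, List.filter_filter]
  refine List.filter_congr fun i _ => ?_
  by_cases h : i.time < c.time ∧ i.user = c.user ∧ i.adv = c.adv
  · simp [h, hcv i h.2.1 h.2.2]
  · simp [h]

/-- The per-conversion step of `postAttr` with the (user, advertiser) scope. -/
noncomputable def stepFn (a : AttrRule) (D : Dataset) :
    (((ℕ × ℕ) → ℝ) × ((Impression × Conversion) →₀ ℝ)) → Conversion →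
      (((ℕ × ℕ) → ℝ) × ((Impression × Conversion) →₀ ℝ)) :=
  fun st c => applyPairs (fun i => (i.user, i.adv)) c
    ((eligible D c).zip (a (eligible D c) c)) st

lemma pairs_scope (D : Dataset) (c : Conversion) (a : AttrRule) :
    ∀ p ∈ (eligible D c).zip (a (eligible D c) c),
      (fun i : Impression => (i.user, i.adv)) p.1 = (c.user, c.adv) := by
  rintro ⟨i, u⟩ hp
  exact eligible_scope c D i (List.of_mem_zip hp).1

lemma pairs_nonneg (D : Dataset) (c : Conversion) (a : AttrRule) (ha : ValidRule a) :
    ∀ p ∈ (eligible D c).zip (a (eligible D c) c), (0 : ℝ) ≤ p.2 := by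
  rintro ⟨i, u⟩ hp
  have hi := (List.of_mem_zip hp).1
  have hu := (List.of_mem_zip hp).2
  exact (ha _ c (List.ne_nil_of_mem hi)).2.2 u hu

lemma main_fold (a : AttrRule) (ha : ValidRule a) (v : ℕ × ℕ) (rr : ℝ)
    (D D' : Dataset)
    (himps : D.imps = D'.imps.filter fun i => decide ((i.user, i.adv) ≠ v))
    (L : List Conversion)
    (st st' : ((ℕ × ℕ) → ℝ) × ((Impression × Conversion) →₀ ℝ))
    (H1 : ∀ x, x ≠ v → st.1 x = st'.1 x) (H2 : 0 ≤ st'.1 v)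
    (H3 : l1 (st'.2 - st.2) ≤ rr - st'.1 v) :
    (∀ x, x ≠ v →
      ((L.filter fun c : Conversion => decide (some (c.user, c.adv) ≠ some v)).foldl
        (stepFn a D) st).1 x = (L.foldl (stepFn a D') st').1 x) ∧
    0 ≤ (L.foldl (stepFn a D') st').1 v ∧
    l1 ((L.foldl (stepFn a D') st').2 -
        ((L.filter fun c : Conversion => decide (some (c.user, c.adv) ≠ some v)).foldl
          (stepFn a D) st).2) ≤ rr - (L.foldl (stepFn a D') st').1 v := by
  induction L generalizing st st' with
  | nil => exact ⟨H1, H2, H3⟩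
  | cons c L ih =>
    set s : Impression → ℕ × ℕ := fun i => (i.user, i.adv) with hs
    set pairs := (eligible D' c).zip (a (eligible D' c) c) with hpairs
    have hw : ∀ p ∈ pairs, s p.1 = (c.user, c.adv) := pairs_scope D' c a
    have hnn : ∀ p ∈ pairs, (0 : ℝ) ≤ p.2 := pairs_nonneg D' c a ha
    by_cases hcv : (c.user, c.adv) = v
    · -- c has scope v: dropped from D's conversions
      have hfil : ((c :: L).filter fun c : Conversion => decide (some (c.user, c.adv) ≠ some v))
          = L.filter fun c : Conversion => decide (some (c.user, c.adv) ≠ some v) := by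
        rw [List.filter_cons_of_neg]
        simp [hcv]
      rw [hfil, List.foldl_cons]
      have hwv : ∀ p ∈ pairs, s p.1 = v := fun p hp => (hw p hp).trans hcv
      have hstep : stepFn a D' st' c =
          ((applyPairs s c pairs (st'.1, 0)).1,
            st'.2 + (applyPairs s c pairs (st'.1, 0)).2) := by
        rw [stepFn, ← hpairs]
        exact applyPairs_decomp s c pairs st'.1 st'.2
      obtain ⟨hb1, hb2, hb3⟩ := applyPairs_bound s c v pairs hwv hnn st'.1
      refine ih st (stepFn a D' st' c) ?_ ?_ ?_
      · intro x hx
        rw [stepFn, ← hpairs, applyPairs_fst_ne s c v pairs hwv st' x hx]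
        exact H1 x hx
      · rw [hstep]
        exact hb2 H2
      · rw [hstep]
        have heq : st'.2 + (applyPairs s c pairs (st'.1, 0)).2 - st.2
            = (st'.2 - st.2) + (applyPairs s c pairs (st'.1, 0)).2 := by abel
        dsimp only
        rw [heq]
        calc l1 ((st'.2 - st.2) + (applyPairs s c pairs (st'.1, 0)).2)
            ≤ l1 (st'.2 - st.2) + l1 (applyPairs s c pairs (st'.1, 0)).2 := l1_add_le _ _
          _ ≤ rr - (applyPairs s c pairs (st'.1, 0)).1 v := by linarith
    · -- c has scope ≠ v: kept in both
      have hfil : ((c :: L).filter fun c : Conversion => decide (some (c.user, c.adv) ≠ some v))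
          = c :: (L.filter fun c : Conversion => decide (some (c.user, c.adv) ≠ some v)) := by
        rw [List.filter_cons_of_pos]
        simp [hcv]
      rw [hfil, List.foldl_cons, List.foldl_cons]
      have helig : eligible D c = eligible D' c := by
        refine eligible_eq s c D D' v himps ?_
        intro i h1 h2
        rw [hs]
        dsimp only
        rw [h1, h2]
        exact hcv
      have hstepD : stepFn a D st c =
          ((applyPairs s c pairs (st.1, 0)).1,
            st.2 + (applyPairs s c pairs (st.1, 0)).2) := by
        rw [stepFn, helig, ← hpairs]
        exact applyPairs_decomp s c pairs st.1 st.2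
      have hstepD' : stepFn a D' st' c =
          ((applyPairs s c pairs (st'.1, 0)).1,
            st'.2 + (applyPairs s c pairs (st'.1, 0)).2) := by
        rw [stepFn, ← hpairs]
        exact applyPairs_decomp s c pairs st'.1 st'.2
      obtain ⟨hc1, hc2⟩ := applyPairs_congr s c (c.user, c.adv) pairs hw st.1 st'.1
        (H1 _ hcv) 0
      refine ih (stepFn a D st c) (stepFn a D' st' c) ?_ ?_ ?_
      · intro x hx
        rw [hstepD, hstepD']
        dsimp only
        by_cases hxw : x = (c.user, c.adv)
        · subst hxw; exact hc1
        · rw [applyPairs_fst_ne s c _ pairs hw _ x hxw,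
              applyPairs_fst_ne s c _ pairs hw _ x hxw]
          exact H1 x hx
      · rw [hstepD']
        dsimp only
        rw [applyPairs_fst_ne s c _ pairs hw _ v (fun h => hcv h.symm)]
        exact H2
      · rw [hstepD, hstepD']
        dsimp only
        rw [applyPairs_fst_ne s c _ pairs hw _ v (fun h => hcv h.symm)]
        have heq : st'.2 + (applyPairs s c pairs (st'.1, 0)).2 -
            (st.2 + (applyPairs s c pairs (st.1, 0)).2) = st'.2 - st.2 := by
          rw [hc2]; abel
        rw [heq]
        exact H3

end Aux

/-- Theorem A.4: for any attribution rule, the user × advertiser adjacency relation with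
post-attribution contribution bound enforcement (bound `r`, per (user, advertiser) scope)
yields attributed datasets at ℓ₁-distance at most `r`. -/
theorem post_attr_user_advertiser_valid (a : AttrRule) (ha : ValidRule a)
    (r : ℕ) (hr : 0 < r) (v : ℕ × ℕ) (D D' : Dataset) (hD' : SortedDS D')
    (hadj : RemovesScope (fun i => (i.user, i.adv)) (fun c => some (c.user, c.adv)) v D D') :
    l1dist (postAttr a (fun i => (i.user, i.adv)) (r : ℝ) D)
      (postAttr a (fun i => (i.user, i.adv)) (r : ℝ) D') ≤ (r : ℝ) := by
  obtain ⟨himps, hconvs⟩ := hadj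
  have key := main_fold a ha v (r : ℝ) D D' himps D'.convs
      ((fun _ => (r : ℝ)), 0) ((fun _ => (r : ℝ)), 0)
      (fun x _ => rfl) (by positivity) (by simp [l1])
  obtain ⟨-, h2, h3⟩ := key
  have hdd : postAttr a (fun i => (i.user, i.adv)) (r : ℝ) D =
      ((D'.convs.filter fun c : Conversion => decide (some (c.user, c.adv) ≠ some v)).foldl
        (stepFn a D) ((fun _ => (r : ℝ)), 0)).2 := by
    rw [postAttr]
    have hc : D.convs = D'.convs.filter
        fun c : Conversion => decide (some (c.user, c.adv) ≠ some v) := hconvs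
    rw [hc]
    rfl
  have hdd' : postAttr a (fun i => (i.user, i.adv)) (r : ℝ) D' =
      (D'.convs.foldl (stepFn a D') ((fun _ => (r : ℝ)), 0)).2 := rfl
  rw [l1dist, hdd, hdd']
  set T := (D'.convs.filter fun c : Conversion => decide (some (c.user, c.adv) ≠ some v)).foldl
      (stepFn a D) ((fun _ => (r : ℝ)), 0) with hT
  set T' := D'.convs.foldl (stepFn a D') ((fun _ => (r : ℝ)), 0) with hT'
  show l1 (T.2 - T'.2) ≤ (r : ℝ)
  rw [show T.2 - T'.2 = -(T'.2 - T.2) by abel, l1_neg]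
  linarith
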